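/- Let a ≥ 1, ρ > 0, and let λ_n = √(n² + ξ_n) where ξ_n ∈ [0,1] for every n ∈ ℤ and ξ_0 > 0. Let w, w̄ : ℤ → ℂ satisfy ‖w‖_{a,ρ} < ∞ and ‖w̄‖_{a,ρ} < ∞, set q_n := w_n + w̄_n, and define v_n := (n²/(4λ_n)) · q_n · Σ_{m∈ℤ} (m²/(4λ_m)) q_m² (the gradient in w̄_n of the Kirchhoff quartic G¹(w,w̄) = (1/16) Σ_{n,m} (n²m²/(λ_nλ_m)) (w_n+w̄_n)²(w_m+w̄_m)²). Then Σ_{n∈ℤ} |v_n| · max(|n|,1)^{a−1} · e^{|n|ρ} ≤ (1/16) (‖w‖_{a,ρ} + ‖w̄‖_{a,ρ})³. In particular the gradient of G¹ maps l¹_{a,ρ} × l¹_{a,ρ} into l¹_{a−1,ρ} with cubic bound. -/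

import Mathlib

/-- The weight of the paper's space `l¹_{a,ρ}`: `max(|n|,1)^a · e^{|n|ρ}`. -/
noncomputable def lweight (a ρ : ℝ) (n : ℤ) : ℝ :=
  (max |(n : ℝ)| 1) ^ a * Real.exp (|(n : ℝ)| * ρ)

/-- The weighted ℓ¹ norm `‖p‖_{a,ρ}`. -/
noncomputable def wnorm (a ρ : ℝ) (p : ℤ → ℂ) : ℝ :=
  ∑' n : ℤ, norm (p n) * lweight a ρ n

lemma lweight_one_le {a ρ : ℝ} (ha : 0 ≤ a) (hρ : 0 ≤ ρ) (n : ℤ) :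
    1 ≤ lweight a ρ n := by
  unfold lweight
  have h1 : (1:ℝ) ≤ max |(n:ℝ)| 1 := le_max_right _ _
  have h2 : (1:ℝ) ≤ (max |(n:ℝ)| 1) ^ a := Real.one_le_rpow h1 ha
  have h3 : (1:ℝ) ≤ Real.exp (|(n:ℝ)| * ρ) :=
    Real.one_le_exp (mul_nonneg (abs_nonneg _) hρ)
  nlinarith

set_option maxHeartbeats 1000000 in
/-- the gradient `G¹_{w̄}` of the Kirchhoff quartic maps
`l¹_{a,ρ} × l¹_{a,ρ}` into `l¹_{a−1,ρ}` with the cubic bound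
`Σ_n |v_n| max(|n|,1)^{a−1} e^{|n|ρ} ≤ (1/16)(‖w‖_{a,ρ}+‖w̄‖_{a,ρ})³`. -/
theorem kirchhoff_quartic_gradient_bound (a ρ : ℝ) (ha : 1 ≤ a) (hρ : 0 < ρ)
    (ξ : ℤ → ℝ) (hξ : ∀ n, ξ n ∈ Set.Icc (0:ℝ) 1) (hξ0 : 0 < ξ 0)
    (w wb : ℤ → ℂ)
    (hw : Summable fun n : ℤ => norm (w n) * lweight a ρ n)
    (hwb : Summable fun n : ℤ => norm (wb n) * lweight a ρ n) :
    Summable (fun m : ℤ =>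
      norm ((((m : ℝ) ^ 2 / (4 * Real.sqrt ((m : ℝ) ^ 2 + ξ m)) : ℝ) : ℂ) *
        (w m + wb m) ^ 2)) ∧
    Summable (fun n : ℤ =>
      norm ((((n : ℝ) ^ 2 / (4 * Real.sqrt ((n : ℝ) ^ 2 + ξ n)) : ℝ) : ℂ) *
          (w n + wb n) *
          ∑' m : ℤ, (((m : ℝ) ^ 2 / (4 * Real.sqrt ((m : ℝ) ^ 2 + ξ m)) : ℝ) : ℂ) *
            (w m + wb m) ^ 2) *
        lweight (a - 1) ρ n) ∧
    (∑' n : ℤ,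
      norm ((((n : ℝ) ^ 2 / (4 * Real.sqrt ((n : ℝ) ^ 2 + ξ n)) : ℝ) : ℂ) *
          (w n + wb n) *
          ∑' m : ℤ, (((m : ℝ) ^ 2 / (4 * Real.sqrt ((m : ℝ) ^ 2 + ξ m)) : ℝ) : ℂ) *
            (w m + wb m) ^ 2) *
        lweight (a - 1) ρ n)
      ≤ (1 / 16) * (wnorm a ρ w + wnorm a ρ wb) ^ 3 := by
  set q : ℤ → ℂ := fun n => w n + wb n with hq
  set c : ℤ → ℝ := fun n => (n : ℝ) ^ 2 / (4 * Real.sqrt ((n : ℝ) ^ 2 + ξ n)) with hc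
  set A : ℤ → ℝ := fun n => norm (q n) * lweight a ρ n with hA
  have ha0 : (0:ℝ) ≤ a := le_trans zero_le_one ha
  have hlw1 : ∀ n : ℤ, 1 ≤ lweight a ρ n := fun n => lweight_one_le ha0 hρ.le n
  have hlwpos : ∀ n : ℤ, 0 < lweight a ρ n := fun n => lt_of_lt_of_le one_pos (hlw1 n)
  have hAnn : ∀ n, 0 ≤ A n := fun n => mul_nonneg (norm_nonneg _) (hlwpos n).le
  -- c is nonneg and ≤ max(|n|,1)/4
  have hcnn : ∀ n, 0 ≤ c n := fun n =>
    div_nonneg (sq_nonneg _) (by positivity)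
  have hcle : ∀ n : ℤ, c n ≤ max |(n:ℝ)| 1 / 4 := by
    intro n
    rcases eq_or_ne n 0 with rfl | hn
    · simp [hc]
    · have hn1 : (1:ℝ) ≤ |(n:ℝ)| := by exact_mod_cast Int.one_le_abs hn
      have hsq : |(n:ℝ)| ≤ Real.sqrt ((n:ℝ)^2 + ξ n) := by
        rw [show |(n:ℝ)| = Real.sqrt ((n:ℝ)^2) by rw [Real.sqrt_sq_eq_abs]]
        exact Real.sqrt_le_sqrt (by linarith [(hξ n).1])
      have hpos : (0:ℝ) < 4 * |(n:ℝ)| := by linarith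
      have : c n ≤ (n:ℝ)^2 / (4 * |(n:ℝ)|) := by
        apply div_le_div_of_nonneg_left (sq_nonneg _) hpos
        linarith
      calc c n ≤ (n:ℝ)^2 / (4 * |(n:ℝ)|) := this
        _ = |(n:ℝ)| / 4 := by
            have hne : |(n:ℝ)| ≠ 0 := by linarith
            have h2 : |(n:ℝ)| * |(n:ℝ)| = (n:ℝ) * (n:ℝ) := abs_mul_abs_self _
            field_simp
            linear_combination (-1 : ℝ) * h2
        _ ≤ max |(n:ℝ)| 1 / 4 := by
            have := le_max_left |(n:ℝ)| 1; linarith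
  -- A is summable with sum ≤ S
  have hAle : ∀ n, A n ≤ norm (w n) * lweight a ρ n + norm (wb n) * lweight a ρ n := by
    intro n
    have := norm_add_le (w n) (wb n)
    have h := hlwpos n
    simp only [hA, hq]
    nlinarith
  have hAsum : Summable A := Summable.of_nonneg_of_le hAnn hAle (hw.add hwb)
  set SA := ∑' n, A n with hSA
  have hSAnn : 0 ≤ SA := tsum_nonneg hAnn
  have hSAle : SA ≤ wnorm a ρ w + wnorm a ρ wb := by
    rw [hSA, wnorm, wnorm, ← Summable.tsum_add hw hwb]
    exact Summable.tsum_le_tsum hAle hAsum (hw.add hwb)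
  have hAleSA : ∀ n, A n ≤ SA := fun n => Summable.le_tsum hAsum n (fun m _ => hAnn m)
  have hqleA : ∀ n, norm (q n) ≤ A n := fun n =>
    le_mul_of_one_le_right (norm_nonneg _) (hlw1 n)
  -- pointwise bound for the inner sum terms
  have hkey1 : ∀ n : ℤ, norm ((c n : ℂ) * q n ^ 2) ≤ (1/4) * (A n * A n) := by
    intro n
    have heq : norm ((c n : ℂ) * q n ^ 2) = c n * norm (q n) ^ 2 := by
      rw [norm_mul, norm_pow, Complex.norm_real, Real.norm_of_nonneg (hcnn n)]
    rw [heq]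
    have hM1 : (1:ℝ) ≤ max |(n:ℝ)| 1 := le_max_right _ _
    have hMa : max |(n:ℝ)| 1 ≤ (max |(n:ℝ)| 1) ^ a := by
      calc max |(n:ℝ)| 1 = (max |(n:ℝ)| 1) ^ (1:ℝ) := (Real.rpow_one _).symm
        _ ≤ (max |(n:ℝ)| 1) ^ a := Real.rpow_le_rpow_of_exponent_le hM1 ha
    have hexp : (1:ℝ) ≤ Real.exp (|(n:ℝ)| * ρ) :=
      Real.one_le_exp (mul_nonneg (abs_nonneg _) hρ.le)
    have hMabs : max |(n:ℝ)| 1 * norm (q n) ≤ A n := by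
      have hq0 := norm_nonneg (q n)
      have hMa0 : (0:ℝ) ≤ max |(n:ℝ)| 1 := by linarith
      calc max |(n:ℝ)| 1 * norm (q n)
          ≤ ((max |(n:ℝ)| 1) ^ a * Real.exp (|(n:ℝ)| * ρ)) * norm (q n) := by
            have h2 : (0:ℝ) ≤ (max |(n:ℝ)| 1) ^ a := le_trans (by linarith) hMa
            have s1 : max |(n:ℝ)| 1 * norm (q n) ≤ (max |(n:ℝ)| 1) ^ a * norm (q n) :=
              mul_le_mul_of_nonneg_right hMa hq0
            nlinarith [mul_nonneg (mul_nonneg h2 hq0) (sub_nonneg.mpr hexp)]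
        _ = A n := by rw [hA]; unfold lweight; ring
    have hq0 := norm_nonneg (q n)
    have h1 := hqleA n
    have h2 := hcle n
    have hM0 : (0:ℝ) ≤ max |(n:ℝ)| 1 := le_trans zero_le_one hM1
    nlinarith [mul_le_mul hMabs h1 hq0 (hAnn n),
      mul_le_mul_of_nonneg_right h2 (mul_nonneg hq0 hq0)]
  -- first summability
  have hsum1 : Summable (fun m : ℤ => norm ((c m : ℂ) * q m ^ 2)) := by
    apply Summable.of_nonneg_of_le (fun n => norm_nonneg _) _
      (hAsum.mul_left ((1/4) * SA))
    intro n
    refine le_trans (hkey1 n) ?_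
    have h := hAleSA n
    nlinarith [hAnn n]
  -- bound the inner sum
  set T : ℂ := ∑' m : ℤ, (c m : ℂ) * q m ^ 2 with hT
  have hTle : norm T ≤ (1/4) * SA * SA := by
    have hsum1' : Summable fun m : ℤ => ‖(c m : ℂ) * q m ^ 2‖ := by
      exact hsum1
    have h1 : norm T ≤ ∑' m, norm ((c m : ℂ) * q m ^ 2) := by
      exact
        norm_tsum_le_tsum_norm (f := fun m : ℤ => (c m : ℂ) * q m ^ 2) hsum1'
    refine le_trans h1 ?_
    calc (∑' m, norm ((c m : ℂ) * q m ^ 2))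
        ≤ ∑' m, (1/4) * SA * A m := by
          apply Summable.tsum_le_tsum _ hsum1 (hAsum.mul_left _)
          intro n
          refine le_trans (hkey1 n) ?_
          have := hAleSA n
          nlinarith [hAnn n]
      _ = (1/4) * SA * SA := by rw [tsum_mul_left]
  -- pointwise bound for the outer sum
  have hkey2 : ∀ n : ℤ,
      norm ((c n : ℂ) * q n * T) * lweight (a-1) ρ n
        ≤ (1/4) * norm T * A n := by
    intro n
    have heq : norm ((c n : ℂ) * q n * T) = c n * norm (q n) * norm T := by
      rw [norm_mul, norm_mul, Complex.norm_real, Real.norm_of_nonneg (hcnn n)]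
    rw [heq]
    have hM1 : (1:ℝ) ≤ max |(n:ℝ)| 1 := le_max_right _ _
    have hM0 : max |(n:ℝ)| 1 ≠ 0 := by positivity
    have hclw : c n * lweight (a-1) ρ n ≤ (1/4) * lweight a ρ n := by
      unfold lweight
      have hrw : (max |(n:ℝ)| 1) ^ (a-1) * max |(n:ℝ)| 1 = (max |(n:ℝ)| 1) ^ a := by
        rw [← Real.rpow_add_one hM0 (a-1), sub_add_cancel]
      have hpos2 : (0:ℝ) ≤ (max |(n:ℝ)| 1) ^ (a-1) * Real.exp (|(n:ℝ)| * ρ) := by positivity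
      have h1 : c n * ((max |(n:ℝ)| 1) ^ (a-1) * Real.exp (|(n:ℝ)| * ρ))
          ≤ (max |(n:ℝ)| 1 / 4) * ((max |(n:ℝ)| 1) ^ (a-1) * Real.exp (|(n:ℝ)| * ρ)) :=
        mul_le_mul_of_nonneg_right (hcle n) hpos2
      refine le_trans h1 (le_of_eq ?_)
      rw [show (max |(n:ℝ)| 1 / 4) * ((max |(n:ℝ)| 1) ^ (a-1) * Real.exp (|(n:ℝ)| * ρ))
          = (1/4) * ((max |(n:ℝ)| 1) ^ (a-1) * max |(n:ℝ)| 1 * Real.exp (|(n:ℝ)| * ρ)) by ring,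
        hrw]
    have hq0 := norm_nonneg (q n)
    have hT0 := norm_nonneg T
    have hlw2 : 0 ≤ lweight (a-1) ρ n := by
      unfold lweight; positivity
    calc c n * norm (q n) * norm T * lweight (a-1) ρ n
        = (c n * lweight (a-1) ρ n) * norm (q n) * norm T := by ring
      _ ≤ ((1/4) * lweight a ρ n) * norm (q n) * norm T := by
          have := mul_le_mul_of_nonneg_right (mul_le_mul_of_nonneg_right hclw hq0) hT0
          linarith
      _ = (1/4) * norm T * A n := by rw [hA]; ring
  have hnn2 : ∀ n : ℤ, 0 ≤ norm ((c n : ℂ) * q n * T) * lweight (a-1) ρ n := by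
    intro n
    have : 0 ≤ lweight (a-1) ρ n := by unfold lweight; positivity
    exact mul_nonneg (norm_nonneg _) this
  have hsum2 : Summable (fun n : ℤ =>
      norm ((c n : ℂ) * q n * T) * lweight (a-1) ρ n) :=
    Summable.of_nonneg_of_le hnn2 hkey2 (hAsum.mul_left _)
  refine ⟨hsum1, hsum2, ?_⟩
  have hbound : (∑' n, norm ((c n : ℂ) * q n * T) * lweight (a-1) ρ n)
      ≤ (1/4) * norm T * SA := by
    calc (∑' n, norm ((c n : ℂ) * q n * T) * lweight (a-1) ρ n)
        ≤ ∑' n, (1/4) * norm T * A n := Summable.tsum_le_tsum hkey2 hsum2 (hAsum.mul_left _)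
      _ = (1/4) * norm T * SA := by rw [tsum_mul_left]
  have hT0 := norm_nonneg T
  have hfinal : (1/4) * norm T * SA ≤ (1/16) * SA ^ 3 := by
    nlinarith [hTle]
  have hScube : SA ^ 3 ≤ (wnorm a ρ w + wnorm a ρ wb) ^ 3 :=
    pow_le_pow_left₀ hSAnn hSAle 3
  calc (∑' n, norm ((c n : ℂ) * q n * T) * lweight (a-1) ρ n)
      ≤ (1/4) * norm T * SA := hbound
    _ ≤ (1/16) * SA ^ 3 := hfinal
    _ ≤ (1/16) * (wnorm a ρ w + wnorm a ρ wb) ^ 3 := by linarith
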